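/- arXiv:2404.17135 — 3 statements merged into one kernel-verified Lean document; each statement's English description precedes it below -/
import Mathlib

section
/- Let S(M) be the unique solution of ∑_{k=2}^{M} (1/(k(k-1)))^s = 1 for integers M ≥ 2. Then S(M) → 1 as M → ∞. -/
open Filter Topology Real Set

private lemma tel (M : ℕ) (hM : 1 ≤ M) :
    ∑ k ∈ Finset.Icc 2 M, ((1 : ℝ) / ((k : ℝ) * ((k : ℝ) - 1))) = 1 - 1/M := by
  induction M with
  | zero => omega
  | succ n ih =>
    rcases Nat.lt_or_ge n 1 with h | h
    · interval_cases n
      simp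
    · rw [Finset.sum_Icc_succ_top (by omega : 2 ≤ n + 1), ih h]
      have h0 : (n : ℝ) ≠ 0 := by positivity
      have h1 : (n : ℝ) + 1 ≠ 0 := by positivity
      push_cast
      field_simp
      ring_nf
      simp [h0]

private lemma xpos {k : ℕ} (hk : 2 ≤ k) :
    0 < (1 : ℝ) / ((k : ℝ) * ((k : ℝ) - 1)) ∧ (1 : ℝ) / ((k : ℝ) * ((k : ℝ) - 1)) ≤ 1/2 := by
  have h2 : (2 : ℝ) ≤ (k : ℝ) := by exact_mod_cast hk
  have hprod : (2 : ℝ) ≤ (k : ℝ) * ((k : ℝ) - 1) := by nlinarith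
  constructor
  · positivity
  · rw [div_le_div_iff₀ (by linarith) (by norm_num)]
    linarith

theorem luroth_SM_tendsto_one (S : ℕ → ℝ)
    (hS : ∀ M : ℕ, 2 ≤ M → 0 ≤ S M ∧
      ∑ k ∈ Finset.Icc 2 M, ((1 : ℝ) / ((k : ℝ) * ((k : ℝ) - 1))) ^ (S M) = 1) :
    Tendsto S atTop (𝓝 1) := by
  have hlt1 : ∀ M : ℕ, 2 ≤ M → S M < 1 := by
    intro M hM
    by_contra hc
    push_neg at hc
    have hle : ∑ k ∈ Finset.Icc 2 M, ((1 : ℝ) / ((k : ℝ) * ((k : ℝ) - 1))) ^ (S M)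
        ≤ ∑ k ∈ Finset.Icc 2 M, ((1 : ℝ) / ((k : ℝ) * ((k : ℝ) - 1))) := by
      apply Finset.sum_le_sum
      intro k hk
      simp only [Finset.mem_Icc] at hk
      obtain ⟨hp, hh⟩ := xpos hk.1
      calc _ ≤ ((1 : ℝ) / ((k : ℝ) * ((k : ℝ) - 1))) ^ (1 : ℝ) :=
            Real.rpow_le_rpow_of_exponent_ge hp (by linarith) hc
        _ = _ := Real.rpow_one _
    rw [(hS M hM).2, tel M (by omega)] at hle
    have : 0 < 1 / (M : ℝ) := by positivity
    linarith
  rw [tendsto_order]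
  constructor
  · intro t ht
    rcases lt_or_ge t 0 with h0 | h0
    · filter_upwards [eventually_ge_atTop 2] with M hM
      exact lt_of_lt_of_le h0 (hS M hM).1
    · have h2 : (1/2 : ℝ) < (1/2 : ℝ) ^ t := by
        calc (1/2 : ℝ) = (1/2 : ℝ) ^ (1 : ℝ) := (Real.rpow_one _).symm
          _ < _ := Real.rpow_lt_rpow_of_exponent_gt (by norm_num) (by norm_num) ht
      obtain ⟨n, hn⟩ := exists_nat_one_div_lt (show (0:ℝ) < (1/2:ℝ)^t - 1/2 by linarith)
      filter_upwards [eventually_ge_atTop (max (n+1) 2)] with M hM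
      have hM2 : 2 ≤ M := le_trans (le_max_right _ _) hM
      have hMn : (n : ℝ) + 1 ≤ (M : ℝ) := by
        have : n + 1 ≤ M := le_trans (le_max_left _ _) hM
        exact_mod_cast this
      have hMinv : 1 / (M : ℝ) < (1/2:ℝ)^t - 1/2 := by
        have hM0 : (0:ℝ) < (M:ℝ) := by positivity
        refine lt_of_le_of_lt ?_ hn
        apply div_le_div_of_nonneg_left (by norm_num) (by positivity) hMn
      by_contra hc
      push_neg at hc
      -- f_M t ≤ f_M (S M) = 1
      have hle : ∑ k ∈ Finset.Icc 2 M, ((1 : ℝ) / ((k : ℝ) * ((k : ℝ) - 1))) ^ t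
          ≤ ∑ k ∈ Finset.Icc 2 M, ((1 : ℝ) / ((k : ℝ) * ((k : ℝ) - 1))) ^ (S M) := by
        apply Finset.sum_le_sum
        intro k hk
        simp only [Finset.mem_Icc] at hk
        obtain ⟨hp, hh⟩ := xpos hk.1
        exact Real.rpow_le_rpow_of_exponent_ge hp (by linarith) hc
      rw [(hS M hM2).2] at hle
      -- but f_M t > 1
      have hsplit : Finset.Icc 2 M = insert 2 (Finset.Icc 3 M) := by
        ext x
        simp only [Finset.mem_insert, Finset.mem_Icc]
        omega
      have h3sum : ∑ k ∈ Finset.Icc 3 M, ((1 : ℝ) / ((k : ℝ) * ((k : ℝ) - 1)))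
          = 1 - 1 / M - 1 / 2 := by
        have := tel M (by omega)
        rw [hsplit, Finset.sum_insert (by simp)] at this
        have h2t : (1:ℝ) / (((2:ℕ):ℝ) * (((2:ℕ):ℝ) - 1)) = 1/2 := by norm_num
        rw [h2t] at this
        linarith
      have hge : (1/2 : ℝ) ^ t + (1 - 1 / (M:ℝ) - 1/2)
          ≤ ∑ k ∈ Finset.Icc 2 M, ((1 : ℝ) / ((k : ℝ) * ((k : ℝ) - 1))) ^ t := by
        rw [hsplit, Finset.sum_insert (by simp), ← h3sum]
        have hterm : ((1 : ℝ) / ((2 : ℕ) * (((2:ℕ) : ℝ) - 1))) ^ t = (1/2 : ℝ) ^ t := by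
          norm_num
        rw [hterm]
        gcongr with k hk
        simp only [Finset.mem_Icc] at hk
        obtain ⟨hp, hh⟩ := xpos (by omega : 2 ≤ k)
        calc ((1 : ℝ) / ((k : ℝ) * ((k : ℝ) - 1)))
            = ((1 : ℝ) / ((k : ℝ) * ((k : ℝ) - 1))) ^ (1:ℝ) := (Real.rpow_one _).symm
          _ ≤ _ := Real.rpow_le_rpow_of_exponent_ge hp (by linarith) (by linarith)
      linarith
  · intro a ha
    filter_upwards [eventually_ge_atTop 2] with M hM
    exact lt_trans (hlt1 M hM) ha
end

section
/- For every ε ∈ (0,1), if M > ⌈1 + 1/(2^ε - 1)⌉ then ∑_{k=2}^{M} (1/(k(k-1)))^{1-ε} > 1, and consequently the solution S(M) of ∑_{k=2}^{M}(1/(k(k-1)))^s = 1 satisfies S(M) > 1 - ε. -/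
open Filter Topology Real Set

lemma telescope_aux (M : ℕ) (h : 1 ≤ M) :
    ∑ k ∈ Finset.Icc 2 M, (1 : ℝ) / ((k : ℝ) * ((k : ℝ) - 1)) = 1 - 1 / M := by
  induction M with
  | zero => omega
  | succ n ih =>
    rcases Nat.lt_or_ge n 1 with h1 | h1
    · interval_cases n
      norm_num
    · rw [Finset.sum_Icc_succ_top (by omega), ih h1]
      have hn : (1:ℝ) ≤ (n:ℝ) := by exact_mod_cast h1
      push_cast
      have h0 : (n:ℝ) ≠ 0 := by positivity
      have h0' : (n:ℝ) + 1 ≠ 0 := by positivity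
      field_simp
      ring_nf
      rw [mul_inv_cancel₀ h0]
      ring

lemma rpow_term_eq (x ε : ℝ) (hx : 0 < x) : ((1:ℝ)/x) ^ (1 - ε) = ((1:ℝ)/x) * x ^ ε := by
  have hxe : (0:ℝ) < x ^ ε := Real.rpow_pos_of_pos hx ε
  rw [Real.rpow_sub (by positivity), Real.rpow_one, Real.div_rpow zero_le_one hx.le,
    Real.one_rpow]
  field_simp

theorem luroth_SM_lower_bound (ε : ℝ) (hε : ε ∈ Set.Ioo (0 : ℝ) 1) (M : ℕ)
    (hM : (M : ℝ) > (⌈1 + 1 / ((2 : ℝ) ^ ε - 1)⌉ : ℤ)) :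
    ∑ k ∈ Finset.Icc 2 M, ((1 : ℝ) / ((k : ℝ) * ((k : ℝ) - 1))) ^ (1 - ε) > 1 ∧
    ∀ s : ℝ, 0 ≤ s →
      ∑ k ∈ Finset.Icc 2 M, ((1 : ℝ) / ((k : ℝ) * ((k : ℝ) - 1))) ^ s = 1 →
      s > 1 - ε := by
  obtain ⟨hε0, hε1⟩ := hε
  have h2e : (1:ℝ) < (2:ℝ) ^ ε := by
    rw [Real.one_lt_rpow_iff_of_pos (by norm_num)]
    left; exact ⟨by norm_num, hε0⟩
  have ha : (0:ℝ) < (2:ℝ)^ε - 1 := by linarith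
  have hceil : (1 : ℝ) + 1 / ((2 : ℝ) ^ ε - 1) ≤ (⌈1 + 1 / ((2 : ℝ) ^ ε - 1)⌉ : ℤ) :=
    Int.le_ceil _
  have hMc : (M : ℝ) > 1 + 1 / ((2:ℝ)^ε - 1) := lt_of_le_of_lt hceil hM
  have hM1 : (1:ℝ) ≤ (M:ℝ) := by
    have : (0:ℝ) < 1 / ((2:ℝ)^ε - 1) := by positivity
    linarith
  have hM0 : (0:ℝ) < (M:ℝ) := by linarith
  have hM1' : 1 ≤ M := by exact_mod_cast hM1
  -- termwise lower bound
  have key : ∀ k ∈ Finset.Icc 2 M,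
      (2:ℝ)^ε * ((1 : ℝ) / ((k : ℝ) * ((k : ℝ) - 1))) ≤
      ((1 : ℝ) / ((k : ℝ) * ((k : ℝ) - 1))) ^ (1 - ε) := by
    intro k hk
    simp only [Finset.mem_Icc] at hk
    have hk2 : (2:ℝ) ≤ (k:ℝ) := by exact_mod_cast hk.1
    have hkk : (2:ℝ) ≤ (k:ℝ) * ((k:ℝ) - 1) := by nlinarith
    have hkk0 : (0:ℝ) < (k:ℝ) * ((k:ℝ) - 1) := by linarith
    rw [rpow_term_eq _ _ hkk0]
    have hx0 : (0:ℝ) < 1 / ((k:ℝ) * ((k:ℝ) - 1)) := by positivity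
    have h2x : (2:ℝ)^ε ≤ ((k:ℝ) * ((k:ℝ) - 1)) ^ ε :=
      Real.rpow_le_rpow (by norm_num) hkk hε0.le
    nlinarith
  have hsum : (2:ℝ)^ε * (1 - 1/(M:ℝ)) ≤
      ∑ k ∈ Finset.Icc 2 M, ((1 : ℝ) / ((k : ℝ) * ((k : ℝ) - 1))) ^ (1 - ε) := by
    calc (2:ℝ)^ε * (1 - 1/(M:ℝ))
        = ∑ k ∈ Finset.Icc 2 M, (2:ℝ)^ε * ((1 : ℝ) / ((k : ℝ) * ((k : ℝ) - 1))) := by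
          rw [← Finset.mul_sum, telescope_aux M hM1']
      _ ≤ _ := Finset.sum_le_sum key
  have hgt : (1:ℝ) < (2:ℝ)^ε * (1 - 1/(M:ℝ)) := by
    rw [gt_iff_lt, ← sub_pos] at hMc
    have h1 : 1 / ((2:ℝ)^ε - 1) < (M:ℝ) - 1 := by linarith
    have h2 : 1 < ((M:ℝ) - 1) * ((2:ℝ)^ε - 1) := by
      rw [div_lt_iff₀ ha] at h1; linarith
    have hMne : (M:ℝ) ≠ 0 := hM0.ne'
    rw [show (1 - 1/(M:ℝ)) = ((M:ℝ) - 1)/(M:ℝ) by field_simp]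
    rw [← mul_div_assoc, lt_div_iff₀ hM0]
    nlinarith
  have main : ∑ k ∈ Finset.Icc 2 M, ((1 : ℝ) / ((k : ℝ) * ((k : ℝ) - 1))) ^ (1 - ε) > 1 :=
    lt_of_lt_of_le hgt hsum
  refine ⟨main, fun s hs hsum1 => ?_⟩
  by_contra hcon
  push_neg at hcon
  have hmono : ∑ k ∈ Finset.Icc 2 M, ((1 : ℝ) / ((k : ℝ) * ((k : ℝ) - 1))) ^ (1 - ε) ≤
      ∑ k ∈ Finset.Icc 2 M, ((1 : ℝ) / ((k : ℝ) * ((k : ℝ) - 1))) ^ s := by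
    apply Finset.sum_le_sum
    intro k hk
    simp only [Finset.mem_Icc] at hk
    have hk2 : (2:ℝ) ≤ (k:ℝ) := by exact_mod_cast hk.1
    have hkk : (2:ℝ) ≤ (k:ℝ) * ((k:ℝ) - 1) := by nlinarith
    have hx0 : (0:ℝ) < 1 / ((k:ℝ) * ((k:ℝ) - 1)) := by positivity
    exact Real.rpow_le_rpow_of_exponent_ge hx0 (by rw [div_le_one (by linarith)]; linarith) hcon
  rw [hsum1] at hmono
  linarith
end

section
/- For every real B > 1, the equation ∑_{k=2}^{∞} (1/(B·k(k-1)))^s = 1 has a unique solution s = G(B) in (1/2, 1), the function G is continuous on (1,∞), G(B) → 1 as B → 1⁺, and G(B) → 1/2 as B → ∞. -/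
open Filter Topology Real Set

noncomputable def lurC (s : ℝ) : ℝ :=
  ∑' k : ℕ, ((1 : ℝ) / (((k : ℝ) + 2) * ((k : ℝ) + 1))) ^ s

noncomputable def lurPsi (s : ℝ) : ℝ := Real.log (lurC s) / s

lemma lur_base_pos (k : ℕ) : (0 : ℝ) < (1 : ℝ) / (((k : ℝ) + 2) * ((k : ℝ) + 1)) := by
  positivity

lemma lur_base_lt_one (k : ℕ) : (1 : ℝ) / (((k : ℝ) + 2) * ((k : ℝ) + 1)) < 1 := by
  rw [div_lt_one (by positivity)]
  nlinarith [Nat.cast_nonneg (α := ℝ) k]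

lemma lurC_summable {s : ℝ} (hs : 1/2 < s) :
    Summable (fun k : ℕ => ((1 : ℝ) / (((k : ℝ) + 2) * ((k : ℝ) + 1))) ^ s) := by
  have h2s : 1 < 2 * s := by linarith
  have h1 : Summable (fun n : ℕ => 1 / (n : ℝ) ^ (2 * s)) :=
    Real.summable_one_div_nat_rpow.2 h2s
  have h2 : Summable (fun n : ℕ => 1 / ((n : ℝ) + 1) ^ (2 * s)) := by
    have := (summable_nat_add_iff (f := fun n : ℕ => 1 / (n : ℝ) ^ (2 * s)) 1).2 h1
    simpa using this
  apply h2.of_nonneg_of_le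
  · intro k; positivity
  · intro k
    have hk1 : (0 : ℝ) < (k : ℝ) + 1 := by positivity
    have key : ((k : ℝ) + 1) ^ (2 * s) = (((k : ℝ) + 1) ^ (2 : ℝ)) ^ s := by
      rw [← Real.rpow_mul (le_of_lt hk1)]
    have hbase : ((1 : ℝ) / (((k : ℝ) + 2) * ((k : ℝ) + 1))) ≤ 1 / (((k : ℝ) + 1) ^ (2 : ℝ)) := by
      rw [Real.rpow_two]
      apply div_le_div_of_nonneg_left one_pos.le (by positivity)
      nlinarith [Nat.cast_nonneg (α := ℝ) k]
    calc ((1 : ℝ) / (((k : ℝ) + 2) * ((k : ℝ) + 1))) ^ s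
        ≤ (1 / (((k : ℝ) + 1) ^ (2 : ℝ))) ^ s :=
          Real.rpow_le_rpow (le_of_lt (lur_base_pos k)) hbase (by linarith)
      _ = 1 / ((k : ℝ) + 1) ^ (2 * s) := by
          rw [key, one_div, one_div, Real.inv_rpow (by positivity)]

lemma lurC_strictAntiOn : StrictAntiOn lurC (Set.Ioi (1/2 : ℝ)) := by
  intro s hs t ht hst
  apply Summable.tsum_lt_tsum (i := 0)
  · intro k
    exact Real.rpow_le_rpow_of_exponent_ge (lur_base_pos k) (lur_base_lt_one k).le hst.le
  · exact Real.rpow_lt_rpow_of_exponent_gt (lur_base_pos 0) (lur_base_lt_one 0) hst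
  · exact lurC_summable ht
  · exact lurC_summable hs

lemma lurC_one : lurC 1 = 1 := by
  have hsummable : Summable (fun k : ℕ => ((1 : ℝ) / (((k : ℝ) + 2) * ((k : ℝ) + 1))) ^ (1 : ℝ)) :=
    lurC_summable (by norm_num)
  have hhs : HasSum (fun k : ℕ => ((1 : ℝ) / (((k : ℝ) + 2) * ((k : ℝ) + 1))) ^ (1 : ℝ)) 1 := by
    rw [hsummable.hasSum_iff_tendsto_nat]
    have heq : ∀ n : ℕ, ∑ k ∈ Finset.range n, ((1 : ℝ) / (((k : ℝ) + 2) * ((k : ℝ) + 1))) ^ (1 : ℝ)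
        = 1 - 1 / ((n : ℝ) + 1) := by
      intro n
      have : ∀ k : ℕ, ((1 : ℝ) / (((k : ℝ) + 2) * ((k : ℝ) + 1))) ^ (1 : ℝ)
          = (fun m : ℕ => 1 / ((m : ℝ) + 1)) k - (fun m : ℕ => 1 / ((m : ℝ) + 1)) (k + 1) := by
        intro k
        rw [Real.rpow_one]
        have h1 : ((k : ℝ) + 1) ≠ 0 := by positivity
        have h2 : ((k : ℝ) + 2) ≠ 0 := by positivity
        push_cast
        field_simp
        ring
      rw [Finset.sum_congr rfl (fun k _ => this k), Finset.sum_range_sub']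
      norm_num
    simp only [heq]
    have : Tendsto (fun n : ℕ => 1 / ((n : ℝ) + 1)) atTop (𝓝 0) := by
      exact tendsto_one_div_add_atTop_nhds_zero_nat
    have := this.const_sub 1
    simpa using this
  exact hhs.tsum_eq

lemma lurC_one_le {s : ℝ} (hs : s ∈ Set.Ioc (1/2 : ℝ) 1) : 1 ≤ lurC s := by
  rcases eq_or_lt_of_le hs.2 with h | h
  · rw [h, lurC_one]
  · rw [← lurC_one]
    exact (lurC_strictAntiOn (Set.mem_Ioi.2 hs.1)
      (Set.mem_Ioi.2 (by norm_num : (1/2:ℝ) < 1)) h).le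

lemma lurPsi_strictAntiOn : StrictAntiOn lurPsi (Set.Ioc (1/2 : ℝ) 1) := by
  intro s hs t ht hst
  have hs' : s ∈ Set.Ioi (1/2 : ℝ) := hs.1
  have ht' : t ∈ Set.Ioi (1/2 : ℝ) := ht.1
  have hClt : lurC t < lurC s := lurC_strictAntiOn hs' ht' hst
  have hCt1 : 1 ≤ lurC t := lurC_one_le ht
  have hlogt : 0 ≤ Real.log (lurC t) := Real.log_nonneg hCt1
  have hlogst : Real.log (lurC t) < Real.log (lurC s) :=
    Real.log_lt_log (by linarith) hClt
  have hspos : 0 < s := by linarith [hs.1]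
  have htpos : 0 < t := by linarith [ht.1]
  unfold lurPsi
  calc Real.log (lurC t) / t ≤ Real.log (lurC t) / s := by gcongr
    _ < Real.log (lurC s) / s := by gcongr

lemma lurPsi_one : lurPsi 1 = 0 := by
  unfold lurPsi
  rw [lurC_one, Real.log_one, zero_div]

lemma lur_key {B s : ℝ} (hB : 1 < B) (hs : s ∈ Set.Ioo (1/2 : ℝ) 1)
    (heq : ∑' k : ℕ, ((1 : ℝ) / (B * ((k : ℝ) + 2) * ((k : ℝ) + 1))) ^ s = 1) :
    lurPsi s = Real.log B := by
  have hB0 : (0 : ℝ) < B := by linarith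
  have hterm : ∀ k : ℕ, ((1 : ℝ) / (B * ((k : ℝ) + 2) * ((k : ℝ) + 1))) ^ s
      = (1 / B) ^ s * ((1 : ℝ) / (((k : ℝ) + 2) * ((k : ℝ) + 1))) ^ s := by
    intro k
    rw [← Real.mul_rpow (by positivity) (le_of_lt (lur_base_pos k))]
    congr 1
    field_simp
  simp only [hterm] at heq
  rw [tsum_mul_left] at heq
  change (1 / B) ^ s * lurC s = 1 at heq
  have hBs : (0 : ℝ) < B ^ s := Real.rpow_pos_of_pos hB0 s
  rw [one_div, Real.inv_rpow hB0.le] at heq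
  rw [inv_mul_eq_one₀ (ne_of_gt hBs)] at heq
  have hs0 : s ≠ 0 := by
    have := hs.1; intro h; rw [h] at this; linarith
  unfold lurPsi
  rw [← heq, Real.log_rpow hB0, mul_comm, mul_div_assoc, div_self hs0, mul_one]

lemma lurPsi_lt_rev {a b : ℝ} (ha : a ∈ Set.Ioc (1/2 : ℝ) 1) (hb : b ∈ Set.Ioc (1/2 : ℝ) 1)
    (h : lurPsi b < lurPsi a) : a < b := by
  by_contra hc
  push_neg at hc
  rcases eq_or_lt_of_le hc with h' | h'
  · rw [h'] at h; exact lt_irrefl _ h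
  · exact absurd (lurPsi_strictAntiOn hb ha h') (not_lt.2 h.le)

lemma lur_ev_lower (G : ℝ → ℝ)
    (hGmem : ∀ B : ℝ, 1 < B → G B ∈ Set.Ioo (1/2 : ℝ) 1)
    (hpsiG : ∀ B : ℝ, 1 < B → lurPsi (G B) = Real.log B)
    {s1 B : ℝ} (hs1 : s1 ∈ Set.Ioc (1/2 : ℝ) 1) (hB : 1 < B)
    (hlt : B < Real.exp (lurPsi s1)) : s1 < G B := by
  have hB0 : (0 : ℝ) < B := by linarith
  have h : Real.log B < lurPsi s1 := (Real.log_lt_iff_lt_exp hB0).2 hlt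
  rw [← hpsiG B hB] at h
  exact lurPsi_lt_rev hs1 (Set.Ioo_subset_Ioc_self (hGmem B hB)) h

lemma lur_ev_upper (G : ℝ → ℝ)
    (hGmem : ∀ B : ℝ, 1 < B → G B ∈ Set.Ioo (1/2 : ℝ) 1)
    (hpsiG : ∀ B : ℝ, 1 < B → lurPsi (G B) = Real.log B)
    {s2 B : ℝ} (hs2 : s2 ∈ Set.Ioc (1/2 : ℝ) 1) (hB : 1 < B)
    (hlt : Real.exp (lurPsi s2) < B) : G B < s2 := by
  have hB0 : (0 : ℝ) < B := by linarith
  have h : lurPsi s2 < Real.log B := (Real.lt_log_iff_exp_lt hB0).2 hlt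
  rw [← hpsiG B hB] at h
  exact lurPsi_lt_rev (Set.Ioo_subset_Ioc_self (hGmem B hB)) hs2 h

theorem luroth_GB_properties (G : ℝ → ℝ)
    (hG : ∀ B : ℝ, 1 < B → G B ∈ Set.Ioo (1/2 : ℝ) 1 ∧
      ∑' k : ℕ, ((1 : ℝ) / (B * ((k : ℝ) + 2) * ((k : ℝ) + 1))) ^ (G B) = 1) :
    (∀ B : ℝ, 1 < B → ∃! s : ℝ, s ∈ Set.Ioo (1/2 : ℝ) 1 ∧
      ∑' k : ℕ, ((1 : ℝ) / (B * ((k : ℝ) + 2) * ((k : ℝ) + 1))) ^ s = 1) ∧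
    ContinuousOn G (Set.Ioi 1) ∧
    Tendsto G (nhdsWithin 1 (Set.Ioi 1)) (𝓝 1) ∧
    Tendsto G atTop (𝓝 (1/2)) := by
  have hGmem : ∀ B : ℝ, 1 < B → G B ∈ Set.Ioo (1/2 : ℝ) 1 := fun B hB => (hG B hB).1
  have hpsiG : ∀ B : ℝ, 1 < B → lurPsi (G B) = Real.log B :=
    fun B hB => lur_key hB (hG B hB).1 (hG B hB).2
  have h1mem : (1 : ℝ) ∈ Set.Ioc (1/2 : ℝ) 1 := ⟨by norm_num, le_refl 1⟩
  refine ⟨?_, ?_, ?_, ?_⟩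
  · -- uniqueness
    intro B hB
    obtain ⟨hmem, heq⟩ := hG B hB
    refine ⟨G B, ⟨hmem, heq⟩, ?_⟩
    rintro s ⟨hs, hseq⟩
    have e1 := lur_key hB hs hseq
    have e2 := lur_key hB hmem heq
    exact lurPsi_strictAntiOn.injOn (Set.Ioo_subset_Ioc_self hs)
      (Set.Ioo_subset_Ioc_self hmem) (e1.trans e2.symm)
  · -- continuity
    intro B0 hB0
    have hB0' : (1 : ℝ) < B0 := hB0
    have hmem0 := hGmem B0 hB0'
    have hmem0' := Set.Ioo_subset_Ioc_self hmem0
    have hB0pos : (0 : ℝ) < B0 := by linarith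
    have : Tendsto G (𝓝[Set.Ioi 1] B0) (𝓝 (G B0)) := by
      rw [tendsto_order]
      constructor
      · intro b hb
        set s1 := max b ((1/2 + G B0)/2) with hs1def
        have hs1lt : s1 < G B0 := max_lt hb (by linarith [hmem0.1])
        have hs1mem : s1 ∈ Set.Ioc (1/2 : ℝ) 1 :=
          ⟨lt_of_lt_of_le (by linarith [hmem0.1]) (le_max_right _ _),
            le_trans hs1lt.le hmem0.2.le⟩
        have hpsi : Real.log B0 < lurPsi s1 := by
          rw [← hpsiG B0 hB0']
          exact lurPsi_strictAntiOn hs1mem hmem0' hs1lt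
        have hBlt : B0 < Real.exp (lurPsi s1) := (Real.log_lt_iff_lt_exp hB0pos).1 hpsi
        have hnhds : Set.Iio (Real.exp (lurPsi s1)) ∈ 𝓝[Set.Ioi 1] B0 :=
          nhdsWithin_le_nhds (Iio_mem_nhds hBlt)
        filter_upwards [hnhds, self_mem_nhdsWithin] with B h1 h2
        exact lt_of_le_of_lt (le_max_left _ _) (lur_ev_lower G hGmem hpsiG hs1mem h2 h1)
      · intro b hb
        set s2 := min b ((G B0 + 1)/2) with hs2def
        have hs2gt : G B0 < s2 := lt_min hb (by linarith [hmem0.2])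
        have hs2mem : s2 ∈ Set.Ioc (1/2 : ℝ) 1 :=
          ⟨lt_trans hmem0.1 hs2gt, le_trans (min_le_right _ _) (by linarith [hmem0.2])⟩
        have hpsi : lurPsi s2 < Real.log B0 := by
          rw [← hpsiG B0 hB0']
          exact lurPsi_strictAntiOn hmem0' hs2mem hs2gt
        have hBgt : Real.exp (lurPsi s2) < B0 := (Real.lt_log_iff_exp_lt hB0pos).1 hpsi
        have hnhds : Set.Ioi (Real.exp (lurPsi s2)) ∈ 𝓝[Set.Ioi 1] B0 :=
          nhdsWithin_le_nhds (Ioi_mem_nhds hBgt)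
        filter_upwards [hnhds, self_mem_nhdsWithin] with B h1 h2
        exact lt_of_lt_of_le (lur_ev_upper G hGmem hpsiG hs2mem h2 h1) (min_le_left _ _)
    exact this
  · -- B → 1+
    rw [tendsto_order]
    constructor
    · intro b hb
      set s1 := max b (3/4 : ℝ) with hs1def
      have hs1lt : s1 < 1 := max_lt hb (by norm_num)
      have hs1mem : s1 ∈ Set.Ioc (1/2 : ℝ) 1 :=
        ⟨lt_of_lt_of_le (by norm_num) (le_max_right _ _), hs1lt.le⟩
      have hpsi : (0 : ℝ) < lurPsi s1 := by
        rw [← lurPsi_one]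
        exact lurPsi_strictAntiOn hs1mem h1mem hs1lt
      have h1lt : (1 : ℝ) < Real.exp (lurPsi s1) := by
        calc (1 : ℝ) = Real.exp 0 := Real.exp_zero.symm
          _ < Real.exp (lurPsi s1) := Real.exp_lt_exp.2 hpsi
      have hnhds : Set.Iio (Real.exp (lurPsi s1)) ∈ 𝓝[Set.Ioi 1] (1 : ℝ) :=
        nhdsWithin_le_nhds (Iio_mem_nhds h1lt)
      filter_upwards [hnhds, self_mem_nhdsWithin] with B h1 h2
      exact lt_of_le_of_lt (le_max_left _ _) (lur_ev_lower G hGmem hpsiG hs1mem h2 h1)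
    · intro b hb
      filter_upwards [self_mem_nhdsWithin] with B h2
      exact lt_trans (hGmem B h2).2 hb
  · -- B → ∞
    rw [tendsto_order]
    constructor
    · intro b hb
      filter_upwards [eventually_gt_atTop (1 : ℝ)] with B hB
      exact lt_trans hb (hGmem B hB).1
    · intro b hb
      set s2 := min b (3/4 : ℝ) with hs2def
      have hs2mem : s2 ∈ Set.Ioc (1/2 : ℝ) 1 :=
        ⟨lt_min hb (by norm_num), le_trans (min_le_right _ _) (by norm_num)⟩
      filter_upwards [eventually_gt_atTop (max (Real.exp (lurPsi s2)) 1)] with B hB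
      have hB1 : (1 : ℝ) < B := lt_of_le_of_lt (le_max_right _ _) hB
      have hBe : Real.exp (lurPsi s2) < B := lt_of_le_of_lt (le_max_left _ _) hB
      exact lt_of_lt_of_le (lur_ev_upper G hGmem hpsiG hs2mem hB1 hBe) (min_le_left _ _)
end
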